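/- Let w₁ and w₂ be primitive, unbordered, non-equivalent strings, let x₁ be a prefix of w₁^∞ and x₂ a prefix of w₂^∞. If |w₁| ≤ k·|w₂| for a positive integer k, then the overlap of x₁ and x₂ has length strictly less than k·|w₂|. In particular if |w₁| ≤ |w₂| then |ov(x₁,x₂)| < |w₂|. -/

import Mathlib

open List

def Primitive {α : Type*} (w : List α) : Prop :=
  ∀ (v : List α) (k : ℕ), 2 ≤ k → w ≠ (List.replicate k v).flatten

def Unbordered {α : Type*} (s : List α) : Prop :=
  ∀ b : List α, b ≠ [] → b ≠ s → b <+: s → ¬ b <:+ s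

def IsPrefixOfInfPow {α : Type*} (x w : List α) : Prop :=
  ∃ m : ℕ, x <+: (List.replicate m w).flatten

def pw {α : Type*} (m : ℕ) (w : List α) : List α := (List.replicate m w).flatten

lemma pw_zero {α : Type*} (w : List α) : pw 0 w = [] := rfl

lemma pw_succ {α : Type*} (m : ℕ) (w : List α) : pw (m+1) w = w ++ pw m w := by
  simp [pw, List.replicate_succ]

lemma pw_one {α : Type*} (w : List α) : pw 1 w = w := by simp [pw]

lemma length_pw {α : Type*} (m : ℕ) (w : List α) : (pw m w).length = m * w.length := by
  induction m with
  | zero => simp [pw_zero]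
  | succ n ih => rw [pw_succ, List.length_append, ih]; ring

lemma pw_add {α : Type*} (a b : ℕ) (w : List α) : pw (a+b) w = pw a w ++ pw b w := by
  unfold pw
  rw [List.replicate_add, List.flatten_append]

lemma pw_prefix_pw {α : Type*} {a b : ℕ} (w : List α) (h : a ≤ b) : pw a w <+: pw b w := by
  refine ⟨pw (b - a) w, ?_⟩
  rw [← pw_add]; congr 1; omega

lemma primitive_ne_nil {α : Type*} {w : List α} (h : Primitive w) : w ≠ [] := by
  intro hw
  exact h [] 2 (by norm_num) (by simp [hw])

lemma pw_rotate_aux {α : Type*} {w : List α} {r : ℕ} (hr : r ≤ w.length) (N : ℕ) :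
    pw (N+1) (w.rotate r) = w.drop r ++ pw N w ++ w.take r := by
  induction N with
  | zero => simp [pw_one, pw_zero, List.rotate_eq_drop_append_take hr]
  | succ n ih =>
      rw [pw_succ, ih, List.rotate_eq_drop_append_take hr, pw_succ]
      simp only [List.append_assoc]
      congr 1
      rw [← List.append_assoc, List.take_append_drop]

lemma rotate_pw {α : Type*} {w : List α} {r : ℕ} (hr : r ≤ w.length) (k : ℕ) :
    (pw k w).rotate r = pw k (w.rotate r) := by
  cases k with
  | zero => simp [pw_zero]
  | succ n =>
      have hlen : r ≤ (pw (n+1) w).length := by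
        rw [length_pw]
        calc r ≤ w.length := hr
          _ ≤ (n+1) * w.length := Nat.le_mul_of_pos_left _ (Nat.succ_pos n)
      rw [List.rotate_eq_drop_append_take hlen, pw_rotate_aux hr, pw_succ,
        List.drop_append_of_le_length hr, List.take_append_of_le_length hr]

lemma rotate_pw_full {α : Type*} (w : List α) (k q : ℕ) :
    (pw k w).rotate (q * w.length) = pw k w := by
  induction q with
  | zero => simp
  | succ n ih =>
      have h : (n+1) * w.length = n * w.length + w.length := by ring
      rw [h, ← List.rotate_rotate, ih, rotate_pw (le_refl w.length), List.rotate_length]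

lemma rotate_pw_mod {α : Type*} {w : List α} (hw : w ≠ []) (k s : ℕ) :
    (pw k w).rotate s = pw k (w.rotate (s % w.length)) := by
  have hn : 0 < w.length := List.length_pos_iff.mpr hw
  have h1 : (s / w.length) * w.length + s % w.length = s := by
    rw [Nat.mul_comm]; exact Nat.div_add_mod s w.length
  conv_lhs => rw [← h1, ← List.rotate_rotate, rotate_pw_full]
  exact rotate_pw (le_of_lt (Nat.mod_lt _ hn)) k

lemma primitive_rotate {α : Type*} {w : List α} (h : Primitive w) (r : ℕ) :
    Primitive (w.rotate r) := by
  intro v k hk heq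
  have hw : w ≠ [] := primitive_ne_nil h
  have hn : 0 < w.length := List.length_pos_iff.mpr hw
  set t := w.length - r % w.length with ht
  have hback : w = (w.rotate r).rotate t := by
    rw [List.rotate_rotate, ← List.rotate_mod]
    have hrm : r % w.length < w.length := Nat.mod_lt _ hn
    have h0 : (r + t) % w.length = 0 := by
      have h2 : r + t = w.length * (r / w.length) + w.length := by
        have := Nat.div_add_mod r w.length; omega
      rw [h2, Nat.mul_add_mod, Nat.mod_self]
    rw [h0, List.rotate_zero]
  have hv : v ≠ [] := by
    intro hv0
    apply hw
    have h3 : w.rotate r = [] := by simp [heq, hv0]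
    have h4 := congrArg List.length h3
    simpa using h4
  have h5 : w = pw k (v.rotate (t % v.length)) := by
    rw [hback, heq]
    exact rotate_pw_mod hv k t
  exact h (v.rotate (t % v.length)) k hk h5

lemma drop_pw_prefix {α : Type*} {w : List α} {r : ℕ} (hr : r ≤ w.length) (N : ℕ) :
    (pw N w).drop r <+: pw N (w.rotate r) := by
  cases N with
  | zero => simp [pw_zero]
  | succ n =>
      rw [pw_succ, List.drop_append_of_le_length hr, pw_rotate_aux hr]
      exact ⟨w.take r, by simp [List.append_assoc]⟩

lemma infix_pw_align {α : Type*} {w y : List α} {m : ℕ} (hw : w ≠ [])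
    (h : y <:+: pw m w) : ∃ r ≤ w.length, ∃ N, y <+: pw N (w.rotate r) := by
  have hn : 0 < w.length := List.length_pos_iff.mpr hw
  obtain ⟨s, t, hst⟩ := h
  set q := s.length / w.length with hq
  set r := s.length % w.length with hr
  have hslen : s.length ≤ m * w.length := by
    have h0 : s.length ≤ (pw m w).length := by
      rw [← hst]; simp
    rwa [length_pw] at h0
  have hqm : q ≤ m := by
    have h1 : s.length / w.length ≤ (m * w.length) / w.length :=
      Nat.div_le_div_right hslen
    rwa [Nat.mul_div_cancel _ hn] at h1
  have hy1 : y <+: (pw m w).drop s.length := by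
    rw [← hst]
    have h2 : (s ++ (y ++ t)).drop s.length = y ++ t := List.drop_left
    rw [show s ++ y ++ t = s ++ (y ++ t) by simp [List.append_assoc], h2]
    exact ⟨t, rfl⟩
  have hsplit : (pw m w).drop s.length = (pw (m - q) w).drop r := by
    have h1 : s.length = (pw q w).length + r := by
      rw [length_pw, Nat.mul_comm]
      exact (Nat.div_add_mod s.length w.length).symm
    have h2 : pw m w = pw q w ++ pw (m - q) w := by
      rw [← pw_add]; congr 1; omega
    rw [h1, h2, List.drop_length_add_append]
  refine ⟨r, le_of_lt (Nat.mod_lt _ hn), m - q, ?_⟩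
  rw [hsplit] at hy1
  exact hy1.trans (drop_pw_prefix (le_of_lt (Nat.mod_lt _ hn)) (m - q))

lemma border_pw_dvd {α : Type*} {w P : List α} {k : ℕ} (hu : Unbordered w) (hw : w ≠ [])
    (hpre : P <+: pw k w) (hsuf : P <:+ pw k w) : w.length ∣ P.length := by
  by_contra hdvd
  have hn : 0 < w.length := List.length_pos_iff.mpr hw
  obtain ⟨a, r, hPa, hrn, hr0⟩ :
      ∃ a r, P.length = a * w.length + r ∧ r < w.length ∧ 0 < r := by
    refine ⟨P.length / w.length, P.length % w.length, ?_, Nat.mod_lt _ hn, ?_⟩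
    · rw [Nat.mul_comm]; exact (Nat.div_add_mod _ _).symm
    · rcases Nat.eq_zero_or_pos (P.length % w.length) with h | h
      · exact absurd (Nat.dvd_of_mod_eq_zero h) hdvd
      · exact h
  have hrP : r ≤ P.length := by omega
  have hPlen : P.length ≤ k * w.length := by
    have := hpre.length_le; rwa [length_pw] at this
  have hak : a + 1 ≤ k := by
    by_contra hc
    push_neg at hc
    have h2 : k * w.length ≤ a * w.length := Nat.mul_le_mul_right _ (by omega)
    omega
  have htake1 : P.take r = w.take r := by
    obtain ⟨u, hu'⟩ := hpre
    have hk1 : pw k w = w ++ pw (k-1) w := by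
      rw [← pw_succ]; congr 1; omega
    have e1 : (pw k w).take r = w.take r := by
      rw [hk1, List.take_append_of_le_length (le_of_lt hrn)]
    have e2 : (pw k w).take r = P.take r := by
      rw [← hu', List.take_append_of_le_length hrP]
    rw [← e2, e1]
  have hdrop1 : P = w.drop (w.length - r) ++ pw a w := by
    obtain ⟨u, hu'⟩ := hsuf
    have hulen : u.length + P.length = k * w.length := by
      have h6 := congrArg List.length hu'
      rw [List.length_append, length_pw] at h6
      omega
    have hP : P = (pw k w).drop u.length := by rw [← hu', List.drop_left]
    have hsplit : pw k w = pw (k - a - 1) w ++ pw (a + 1) w := by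
      rw [← pw_add]; congr 1; omega
    have hlen2 : u.length = (pw (k - a - 1) w).length + (w.length - r) := by
      rw [length_pw]
      have hmul : (k - a - 1) * w.length + (a+1) * w.length = k * w.length := by
        rw [← Nat.add_mul]; congr 1; omega
      have hmul2 : (a + 1) * w.length = a * w.length + w.length := by ring
      omega
    rw [hP, hlen2, hsplit, List.drop_length_add_append, pw_succ,
      List.drop_append_of_le_length (by omega)]
  have hlr : (w.drop (w.length - r)).length = r := by
    rw [List.length_drop]; omega
  have htake2 : P.take r = w.drop (w.length - r) := by
    rw [hdrop1]; exact List.take_left' hlr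
  have hb : w.take r = w.drop (w.length - r) := by rw [← htake1, htake2]
  have hbn : w.take r ≠ [] := by
    have h7 : (w.take r).length = r := by
      rw [List.length_take]; exact min_eq_left (by omega)
    intro h0; rw [h0] at h7; simp at h7; omega
  have hbw : w.take r ≠ w := by
    intro h0
    have h8 := congrArg List.length h0
    rw [List.length_take, min_eq_left (by omega)] at h8
    omega
  exact hu (w.take r) hbn hbw (List.take_prefix r w) (hb ▸ List.drop_suffix (w.length - r) w)

theorem overlap_lt_k_mul_len {α : Type*} (w₁ w₂ x₁ x₂ ov : List α) (k : ℕ)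
    (hp₁ : Primitive w₁) (hp₂ : Primitive w₂)
    (hu₁ : Unbordered w₁) (hu₂ : Unbordered w₂)
    (hne : ¬ w₁.IsRotated w₂)
    (hx₁ : IsPrefixOfInfPow x₁ w₁) (hx₂ : IsPrefixOfInfPow x₂ w₂)
    (hk : 0 < k) (hlen : w₁.length ≤ k * w₂.length)
    (hov₁ : ov <:+ x₁) (hov₂ : ov <+: x₂)
    (hovmax : ∀ u : List α, u <:+ x₁ → u <+: x₂ → u.length ≤ ov.length) :
    ov.length < k * w₂.length := by
  by_contra hcon
  push_neg at hcon
  have hw₁ : w₁ ≠ [] := primitive_ne_nil hp₁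
  have hw₂ : w₂ ≠ [] := primitive_ne_nil hp₂
  have hn₂ : 0 < w₂.length := List.length_pos_iff.mpr hw₂
  have hn₁ : 0 < w₁.length := List.length_pos_iff.mpr hw₁
  obtain ⟨m₁, hm₁⟩ := hx₁
  obtain ⟨m₂, hm₂⟩ := hx₂
  have hm₁' : x₁ <+: pw m₁ w₁ := hm₁
  have hm₂' : x₂ <+: pw m₂ w₂ := hm₂
  have hovp : ov <+: pw m₂ w₂ := hov₂.trans hm₂'
  have hklen : k * w₂.length ≤ m₂ * w₂.length := by
    have := hovp.length_le; rw [length_pw] at this; omega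
  have hkm₂ : k ≤ m₂ := Nat.le_of_mul_le_mul_right hklen hn₂
  set S := pw k w₂ with hSdef
  have hSlen : S.length = k * w₂.length := length_pw k w₂
  have hS : S <+: ov :=
    List.prefix_of_prefix_length_le (pw_prefix_pw w₂ hkm₂) hovp (by omega)
  have hinf : S <:+: pw m₁ w₁ := (hS.isInfix.trans hov₁.isInfix).trans hm₁'.isInfix
  obtain ⟨r, hr, N, hyN⟩ := infix_pw_align hw₁ hinf
  set v := w₁.rotate r with hvdef
  have hvlen : v.length = w₁.length := by simp [hvdef]
  have hpv : Primitive v := primitive_rotate hp₁ r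
  have hyN' : S <+: pw (N+1) v := hyN.trans (pw_prefix_pw v (Nat.le_succ N))
  have hvS : v.length ≤ S.length := by omega
  set ℓ := S.length - v.length with hℓ
  have hdropS : S.drop v.length <+: pw N v := by
    obtain ⟨u, hu'⟩ := hyN'
    rw [pw_succ] at hu'
    have h1 : (S ++ u).drop v.length = S.drop v.length ++ u :=
      List.drop_append_of_le_length hvS
    have h2 : (v ++ pw N v).drop v.length = pw N v := List.drop_left
    refine ⟨u, ?_⟩
    rw [← h1, hu', h2]
  have htakeS : S.take ℓ <+: pw (N+1) v := (List.take_prefix ℓ S).trans hyN'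
  have hdropS' : S.drop v.length <+: pw (N+1) v :=
    hdropS.trans (pw_prefix_pw v (Nat.le_succ N))
  have hlt : (S.take ℓ).length = ℓ := by
    rw [List.length_take]; exact min_eq_left (by omega)
  have hld : (S.drop v.length).length = ℓ := by
    rw [List.length_drop]
  have heqP : S.take ℓ = S.drop v.length :=
    List.IsPrefix.eq_of_length
      (List.prefix_of_prefix_length_le htakeS hdropS' (by rw [hlt, hld]))
      (by rw [hlt, hld])
  have hPsuf : S.take ℓ <:+ S := heqP ▸ List.drop_suffix v.length S
  have hdvd : w₂.length ∣ (S.take ℓ).length :=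
    border_pw_dvd hu₂ hw₂ (List.take_prefix ℓ S) hPsuf
  have hdvdℓ : w₂.length ∣ ℓ := by rwa [hlt] at hdvd
  have hdvd₁ : w₂.length ∣ w₁.length := by
    have h1 : w₂.length ∣ k * w₂.length := dvd_mul_left _ _
    have h2 := Nat.dvd_sub h1 hdvdℓ
    have he : k * w₂.length - ℓ = w₁.length := by omega
    rwa [he] at h2
  set t := w₁.length / w₂.length with htdef
  have htmul : t * w₂.length = w₁.length := Nat.div_mul_cancel hdvd₁
  have ht1 : 1 ≤ t := by
    rcases Nat.eq_zero_or_pos t with h0 | h1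
    · rw [h0] at htmul; simp at htmul; omega
    · exact h1
  have htk : t ≤ k := by
    have h3 : t * w₂.length ≤ k * w₂.length := by rw [htmul]; exact hlen
    exact Nat.le_of_mul_le_mul_right h3 hn₂
  have hvpre : v <+: pw (N+1) v := ⟨pw N v, (pw_succ N v).symm⟩
  have htpre : pw t w₂ <+: pw (N+1) v := (pw_prefix_pw w₂ htk).trans hyN'
  have hveq : v = pw t w₂ :=
    List.IsPrefix.eq_of_length
      (List.prefix_of_prefix_length_le hvpre htpre
        (le_of_eq (by rw [length_pw, hvlen, htmul])))
      (by rw [length_pw, hvlen, htmul])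
  rcases Nat.lt_or_ge t 2 with h2 | h2
  · have ht : t = 1 := by omega
    rw [ht, pw_one] at hveq
    exact hne ⟨r, hveq⟩
  · exact hpv w₂ t h2 hveq
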